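/- If the communication matrix P is row-stochastic with P_{ii} > 0 for all i, then the system of equations p_i^{(sp)} = P_{ii} p_i^{(p)} + Σ_{j≠i} P_{ij} p_j^{(sp)}, i = 1,...,N, has a unique solution in probability densities (p_1^{(sp)}, ..., p_N^{(sp)}) given physical densities (p_1^{(p)}, ..., p_N^{(p)}), and each p_i^{(sp)} is a convex combination of the physical densities p_1^{(p)}, ..., p_N^{(p)}. -/

import Mathlib

open MeasureTheory

section Aux

variable {N : ℕ}

/-- The matrix `I - Q` where `Q` is `P` with its diagonal zeroed out. -/
noncomputable def commA (P : Matrix (Fin N) (Fin N) ℝ) : Matrix (Fin N) (Fin N) ℝ :=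
  Matrix.of fun i j => if i = j then 1 else -(P i j)

lemma erase_sum_eq (P : Matrix (Fin N) (Fin N) ℝ) (hrow : ∀ i, ∑ j, P i j = 1) (k : Fin N) :
    ∑ j ∈ Finset.univ.erase k, P k j = 1 - P k k := by
  have h := Finset.add_sum_erase Finset.univ (fun j => P k j) (Finset.mem_univ k)
  rw [hrow k] at h
  linarith

lemma commA_mulVec (P : Matrix (Fin N) (Fin N) ℝ) (v : Fin N → ℝ) (i : Fin N) :
    (commA P).mulVec v i = v i - ∑ j ∈ Finset.univ.erase i, P i j * v j := by
  rw [Matrix.mulVec, dotProduct,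
    ← Finset.add_sum_erase Finset.univ (fun j => commA P i j * v j) (Finset.mem_univ i)]
  have h1 : commA P i i * v i = v i := by simp [commA]
  have h2 : ∑ j ∈ Finset.univ.erase i, commA P i j * v j
      = - ∑ j ∈ Finset.univ.erase i, P i j * v j := by
    rw [← Finset.sum_neg_distrib]
    refine Finset.sum_congr rfl fun j hj => ?_
    simp [commA, Ne.symm (Finset.ne_of_mem_erase hj)]
  rw [h1, h2]
  ring

lemma commA_det_isUnit (P : Matrix (Fin N) (Fin N) ℝ)
    (hnn : ∀ i j, 0 ≤ P i j) (hrow : ∀ i, ∑ j, P i j = 1) (hdiag : ∀ i, 0 < P i i) :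
    IsUnit (commA P).det := by
  rw [isUnit_iff_ne_zero]
  apply det_ne_zero_of_sum_row_lt_diag
  intro k
  have h1 : ∀ j ∈ Finset.univ.erase k, ‖commA P k j‖ = P k j := by
    intro j hj
    simp only [commA, Matrix.of_apply, if_neg (Ne.symm (Finset.ne_of_mem_erase hj)),
      norm_neg, Real.norm_eq_abs, abs_of_nonneg (hnn k j)]
  have h2 : commA P k k = 1 := by simp [commA]
  rw [Finset.sum_congr rfl h1, erase_sum_eq P hrow k, h2, norm_one]
  linarith [hdiag k]

/-- If `A v = u` with `u ≥ 0`, then `v ≥ 0` (M-matrix argument via the minimal entry). -/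
lemma nonneg_of_commA_mulVec (P : Matrix (Fin N) (Fin N) ℝ)
    (hnn : ∀ i j, 0 ≤ P i j) (hrow : ∀ i, ∑ j, P i j = 1) (hdiag : ∀ i, 0 < P i i)
    (v u : Fin N → ℝ) (hu : ∀ i, 0 ≤ u i) (h : (commA P).mulVec v = u) :
    ∀ i, 0 ≤ v i := by
  intro i
  have hne : (Finset.univ : Finset (Fin N)).Nonempty := ⟨i, Finset.mem_univ i⟩
  obtain ⟨k, -, hk⟩ := Finset.exists_min_image Finset.univ v hne
  have hk' : ∀ j, v k ≤ v j := fun j => hk j (Finset.mem_univ j)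
  have heq : v k - ∑ j ∈ Finset.univ.erase k, P k j * v j = u k := by
    rw [← commA_mulVec P v k, h]
  have hb : ∑ j ∈ Finset.univ.erase k, P k j * v k ≤
      ∑ j ∈ Finset.univ.erase k, P k j * v j :=
    Finset.sum_le_sum fun j _ => mul_le_mul_of_nonneg_left (hk' j) (hnn k j)
  rw [← Finset.sum_mul, erase_sum_eq P hrow k] at hb
  have h0 : 0 ≤ P k k * v k := by nlinarith [hu k]
  have hvk : 0 ≤ v k := nonneg_of_mul_nonneg_right h0 (hdiag k)
  exact hvk.trans (hk' i)

end Aux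

/-- If the communication matrix `P` is row-stochastic with strictly positive
diagonal, then the fixed-point mixture equations
`ps i = P i i • pp i + Σ_{j ≠ i} P i j • ps j` have a unique solution given the physical
densities `pp i`, and each solution component is a convex combination of the physical
densities (in particular, a probability density). -/
theorem social_density_unique_convex_combination
    (N : ℕ) (P : Matrix (Fin N) (Fin N) ℝ)
    (hnn : ∀ i j, 0 ≤ P i j) (hrow : ∀ i, ∑ j, P i j = 1) (hdiag : ∀ i, 0 < P i i)
    (pp : Fin N → ℝ → ℝ)
    (hpp : ∀ i, (∀ x, 0 ≤ pp i x) ∧ Integrable (pp i) ∧ (∫ x, pp i x) = 1) :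
    (∃! ps : Fin N → ℝ → ℝ, ∀ i x,
        ps i x = P i i * pp i x + ∑ j ∈ Finset.univ.erase i, P i j * ps j x) ∧
      ∀ ps : Fin N → ℝ → ℝ,
        (∀ i x, ps i x = P i i * pp i x + ∑ j ∈ Finset.univ.erase i, P i j * ps j x) →
        ∀ i, ∃ w : Fin N → ℝ, (∀ j, 0 ≤ w j) ∧ (∑ j, w j = 1) ∧
          ∀ x, ps i x = ∑ j, w j * pp j x := by
  set A := commA P with hA
  have hAdet : IsUnit A.det := commA_det_isUnit P hnn hrow hdiag
  have hAA : A * A⁻¹ = 1 := Matrix.mul_nonsing_inv A hAdet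
  have hA'A : A⁻¹ * A = 1 := Matrix.nonsing_inv_mul A hAdet
  -- characterization: satisfying the equations ↔ A.mulVec (ps · x) = b x
  have hchar : ∀ (ps : Fin N → ℝ → ℝ),
      (∀ i x, ps i x = P i i * pp i x + ∑ j ∈ Finset.univ.erase i, P i j * ps j x)
      ↔ ∀ x, A.mulVec (fun j => ps j x) = fun i => P i i * pp i x := by
    intro ps
    constructor
    · intro h x
      funext i
      rw [commA_mulVec P (fun j => ps j x) i]
      have := h i x
      linarith [this]
    · intro h i x
      have := congrFun (h x) i
      rw [commA_mulVec P (fun j => ps j x) i] at this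
      linarith [this]
  -- solving: if A.mulVec v = b then v = A⁻¹.mulVec b
  have hsolve : ∀ (v b : Fin N → ℝ), A.mulVec v = b → v = A⁻¹.mulVec b := by
    intro v b h
    have : A⁻¹.mulVec (A.mulVec v) = A⁻¹.mulVec b := by rw [h]
    rwa [Matrix.mulVec_mulVec, hA'A, Matrix.one_mulVec] at this
  -- the inverse has nonnegative entries
  have hinvnn : ∀ i j, 0 ≤ A⁻¹ i j := by
    intro i j
    refine nonneg_of_commA_mulVec P hnn hrow hdiag (fun m => A⁻¹ m j)
      (fun m => (1 : Matrix (Fin N) (Fin N) ℝ) m j) ?_ ?_ i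
    · intro m
      by_cases hmj : m = j <;> simp [Matrix.one_apply, hmj]
    · funext m
      rw [← hAA, Matrix.mul_apply]
      rfl
  -- row sums of A⁻¹ weighted by diag P equal 1
  have hones : ∀ i, ∑ j, A⁻¹ i j * P j j = 1 := by
    have h1 : A.mulVec (fun _ => 1) = fun j => P j j := by
      funext k
      rw [commA_mulVec P (fun _ => 1) k]
      simp only [mul_one]
      rw [erase_sum_eq P hrow k]
      ring
    have := hsolve (fun _ => 1) (fun j => P j j) h1
    intro i
    have h2 := congrFun this i
    rw [Matrix.mulVec, dotProduct] at h2
    exact h2.symm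
  -- the candidate solution
  set ps₀ : Fin N → ℝ → ℝ := fun i x => ∑ j, A⁻¹ i j * (P j j * pp j x) with hps₀
  have hps₀mv : ∀ x, (fun j => ps₀ j x) = A⁻¹.mulVec (fun j => P j j * pp j x) := by
    intro x; funext j; rfl
  have hps₀sol : ∀ i x, ps₀ i x = P i i * pp i x +
      ∑ j ∈ Finset.univ.erase i, P i j * ps₀ j x := by
    rw [hchar]
    intro x
    rw [hps₀mv x, Matrix.mulVec_mulVec, hAA, Matrix.one_mulVec]
  refine ⟨⟨ps₀, hps₀sol, ?_⟩, ?_⟩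
  · intro ps hps
    funext i x
    have h := hsolve (fun j => ps j x) (fun i => P i i * pp i x) ((hchar ps).mp hps x)
    calc ps i x = A⁻¹.mulVec (fun j => P j j * pp j x) i := congrFun h i
      _ = ps₀ i x := by rw [← hps₀mv x]
  · intro ps hps i
    refine ⟨fun j => A⁻¹ i j * P j j, fun j => mul_nonneg (hinvnn i j) (hnn j j), hones i, ?_⟩
    intro x
    have h := hsolve (fun j => ps j x) (fun i => P i i * pp i x) ((hchar ps).mp hps x)
    calc ps i x = A⁻¹.mulVec (fun j => P j j * pp j x) i := congrFun h i
      _ = ∑ j, A⁻¹ i j * P j j * pp j x := by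
          rw [Matrix.mulVec, dotProduct]
          exact Finset.sum_congr rfl fun j _ => by ring
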